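/- If λ_1, …, λ_k are the roots of λ^k − z^{-1}(λ^{k−1} + ⋯ + λ + 1) for real z > 0, then for all i ≠ j, |λ_i − λ_j| ≥ c_k |λ_j| for a positive constant c_k depending only on k. -/

import Mathlib

open Polynomial

namespace Stmt14Aux

open Finset


noncomputable def sig (k : ℕ) (u : ℂ) : ℂ := ∑ i ∈ range k, u ^ (i+1)

noncomputable def Qf (k : ℕ) (u v : ℂ) : ℂ :=
  ∑ i ∈ range k, ∑ j ∈ range (i+1), u^j * v^(i-j)

noncomputable def Qt (k : ℕ) (w t : ℂ) : ℂ :=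
  ∑ i ∈ range k, w^(k-1-i) * ∑ j ∈ range (i+1), t^(i-j)

lemma sig_sub (k : ℕ) (u v : ℂ) : sig k u - sig k v = Qf k u v * (u - v) := by
  rw [sig, sig, ← Finset.sum_sub_distrib, Qf, Finset.sum_mul]
  refine sum_congr rfl fun i _ => ?_
  simpa using (geom_sum₂_mul u v (i+1)).symm

lemma Qf_diag (k : ℕ) (u : ℂ) : Qf k u u = ∑ i ∈ range k, ((i:ℂ)+1) * u^i := by
  unfold Qf
  refine sum_congr rfl fun i _ => ?_
  have : ∀ j ∈ range (i+1), u^j * u^(i-j) = u^i := by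
    intro j hj
    rw [← pow_add]
    congr 1
    have := mem_range.mp hj; omega
  rw [sum_congr rfl this, Finset.sum_const, card_range, nsmul_eq_mul]
  push_cast; ring

lemma E1 (k : ℕ) (u : ℂ) : (u - 1) * sig k u = u^(k+1) - u := by
  rw [sig, Finset.mul_sum]
  calc ∑ i ∈ range k, (u-1)*u^(i+1)
      = ∑ i ∈ range k, (u^(i+1+1) - u^(i+1)) := sum_congr rfl fun i _ => by ring
    _ = u^(k+1) - u^(0+1) := Finset.sum_range_sub (fun i => u^(i+1)) k
    _ = u^(k+1) - u := by rw [zero_add, pow_one]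

lemma E2 (k : ℕ) (u : ℂ) :
    sig k u + (u - 1) * Qf k u u = ((k:ℂ)+1) * u^k - 1 := by
  rw [Qf_diag, sig, Finset.mul_sum, ← Finset.sum_add_distrib]
  calc ∑ i ∈ range k, (u^(i+1) + (u-1)*(((i:ℂ)+1) * u^i))
      = ∑ i ∈ range k, ((((i+1:ℕ):ℂ)+1)*u^(i+1) - (((i:ℕ):ℂ)+1)*u^i) :=
        sum_congr rfl fun i _ => by push_cast; ring
    _ = (((k:ℕ):ℂ)+1)*u^k - (((0:ℕ):ℂ)+1)*u^0 :=
        Finset.sum_range_sub (fun i => (((i:ℕ):ℂ)+1)*u^i) k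
    _ = ((k:ℂ)+1) * u^k - 1 := by norm_num

lemma amgm (k : ℕ) (hk : 1 ≤ k) (z : ℝ) (hz : 0 < z) (hzk : z ≠ (k:ℝ)) :
    ((k:ℝ)+1)^(k+1) * z^k < (k:ℝ)^k * (z+1)^(k+1) := by
  have hkR : (0:ℝ) < k := by exact_mod_cast hk
  have hk1 : (0:ℝ) < (k:ℝ)+1 := by linarith
  set t : ℝ := z / k with ht_def
  have ht : 0 < t := div_pos hz hkR
  have ht1 : t ≠ 1 := by
    intro h
    apply hzk
    field_simp [ht_def] at h
    rw [ht_def, div_eq_one_iff_eq (ne_of_gt hkR)] at h; exact h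
  have ha : (0:ℝ) < (k:ℝ)/((k:ℝ)+1) := by positivity
  have hb : (0:ℝ) < 1/((k:ℝ)+1) := by positivity
  have hab : (k:ℝ)/((k:ℝ)+1) + 1/((k:ℝ)+1) = 1 := by field_simp
  have hcc := strictConcaveOn_log_Ioi.2 (Set.mem_Ioi.mpr ht) (Set.mem_Ioi.mpr one_pos)
    ht1 ha hb hab
  rw [Real.log_one] at hcc
  simp only [smul_eq_mul, mul_zero, add_zero, mul_one] at hcc
  -- hcc : k/(k+1) * log t < log (k/(k+1) * t + 1/(k+1))
  set s : ℝ := (k:ℝ)/((k:ℝ)+1) * t + 1/((k:ℝ)+1) with hs_def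
  have hs : 0 < s := by positivity
  have h2 : (k:ℝ) * Real.log t < ((k:ℝ)+1) * Real.log s := by
    have := mul_lt_mul_of_pos_left hcc hk1
    calc (k:ℝ) * Real.log t = ((k:ℝ)+1) * ((k:ℝ)/((k:ℝ)+1) * Real.log t) := by
          field_simp
      _ < ((k:ℝ)+1) * Real.log s := this
  have h3 : t^k < s^(k+1) := by
    have := Real.exp_lt_exp.mpr h2
    rwa [← Nat.cast_add_one, Real.exp_nat_mul, Real.exp_nat_mul, Real.exp_log ht,
      Real.exp_log hs] at this
  -- t = z/k, s = (z+1)/(k+1)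
  have hseq : s = (z+1)/((k:ℝ)+1) := by
    rw [hs_def, ht_def]; field_simp
  rw [ht_def, hseq, div_pow, div_pow] at h3
  rw [div_lt_div_iff₀ (by positivity) (by positivity)] at h3
  linarith [h3]

lemma key_sep (k : ℕ) (hk : 2 ≤ k) (u : ℂ) (z : ℝ) (hz : 0 ≤ z)
    (hs : sig k u = (z:ℂ)) (hQ : Qf k u u = 0) : False := by
  have hk0 : (k:ℝ) ≠ 0 := by positivity
  have hk1 : 1 ≤ k := by omega
  -- h1 : (k+1) * u^k = z + 1
  have h1 : ((k:ℂ)+1) * u^k = (z:ℂ) + 1 := by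
    have h := E2 k u
    rw [hs, hQ, mul_zero, add_zero] at h
    linear_combination -h
  -- h2 : (u-1) * z = u^(k+1) - u
  have h2 : (u - 1) * (z:ℂ) = u^(k+1) - u := by rw [← hs]; exact E1 k u
  -- h4 : u * (k*(z+1)) = (k+1)*z
  have h4 : u * ((k:ℂ)*((z:ℂ)+1)) = ((k:ℂ)+1)*(z:ℂ) := by
    have hp : u^(k+1) = u * u^k := by ring
    -- (k+1)*h2 : (k+1)(u-1)z = (k+1)u^{k+1} - (k+1)u = u*((k+1)u^k) - (k+1)u
    --          = u*(z+1) - (k+1)u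
    linear_combination ((k:ℂ)+1) * h2 + ((k:ℂ)+1) * hp + u * h1
  have hden : ((k:ℝ)*(z+1)) ≠ 0 := by
    have : (0:ℝ) < z + 1 := by linarith
    positivity
  set x : ℝ := ((k:ℝ)+1)*z / ((k:ℝ)*(z+1)) with hx_def
  have hdenC : ((k:ℂ)*((z:ℂ)+1)) ≠ 0 := by
    have : ((((k:ℝ)*(z+1)):ℝ) : ℂ) ≠ 0 := Complex.ofReal_ne_zero.mpr hden
    push_cast at this
    exact this
  have hux : u = (x:ℂ) := by
    have hxC : (x:ℂ) = ((k:ℂ)+1)*(z:ℂ) / ((k:ℂ)*((z:ℂ)+1)) := by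
      rw [hx_def]; push_cast; ring
    rw [hxC, eq_div_iff hdenC]
    exact h4
  have hxeq : ((k:ℝ)+1) * x^k = z + 1 := by
    have h1' := h1
    rw [hux] at h1'
    exact_mod_cast h1'
  rcases eq_or_lt_of_le hz with hz0 | hzpos
  · -- z = 0
    have hx0 : x = 0 := by rw [hx_def, ← hz0]; simp
    rw [hx0, zero_pow (by omega : k ≠ 0), mul_zero, ← hz0] at hxeq
    norm_num at hxeq
  by_cases hzk : z = (k:ℝ)
  · -- u = 1, contradiction with hQ
    have hx1 : x = 1 := by
      rw [hx_def, hzk]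
      field_simp
    rw [hx1] at hux
    have hQ1 : Qf k 1 1 = ((∑ i ∈ range k, (i+1) : ℕ) : ℂ) := by
      rw [Qf_diag]
      push_cast
      simp
    rw [hux] at hQ
    push_cast at hQ
    rw [hQ1] at hQ
    have hpos : 0 < ∑ i ∈ range k, (i+1) := by
      apply Finset.sum_pos (fun i _ => Nat.succ_pos i)
      exact nonempty_range_iff.mpr (by omega)
    exact (Nat.cast_ne_zero.mpr (Nat.pos_iff_ne_zero.mp hpos)) hQ
  · have hlt := amgm k hk1 z hzpos hzk
    have heq : ((k:ℝ)+1)^(k+1) * z^k = (k:ℝ)^k * (z+1)^(k+1) := by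
      rw [hx_def, div_pow, mul_pow, mul_pow] at hxeq
      have hne : ((k:ℝ)*(z+1))^k ≠ 0 := pow_ne_zero _ hden
      rw [mul_pow] at hne
      field_simp at hxeq
      rw [pow_succ, pow_succ]
      nlinarith [hxeq]
    linarith

lemma Qt_eq (k : ℕ) (w t : ℂ) (hw : w ≠ 0) :
    Qt k w t = w^(k-1) * Qf k w⁻¹ (t * w⁻¹) := by
  unfold Qt Qf
  rw [Finset.mul_sum]
  refine sum_congr rfl fun i hi => ?_
  rw [Finset.mul_sum, Finset.mul_sum]
  refine sum_congr rfl fun j hj => ?_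
  have hji : j ≤ i := by have := mem_range.mp hj; omega
  have hik : i ≤ k-1 := by have := mem_range.mp hi; omega
  have hw1 : w^(k-1) = w^(k-1-i) * w^i := by rw [← pow_add]; congr 1; omega
  have e1 : w^j * w^(i-j) = w^i := by rw [← pow_add]; congr 1; omega
  rw [mul_pow, hw1]
  field_simp
  rw [mul_comm (w^j) (w^(i-j))] at e1
  rw [← e1]
  have hA : w^(i-j) * w⁻¹^(i-j) = 1 := by rw [← mul_pow, mul_inv_cancel₀ hw, one_pow]
  have hB : w^j * w⁻¹^j = 1 := by rw [← mul_pow, mul_inv_cancel₀ hw, one_pow]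
  linear_combination (-(t^(i-j)) * w^j * w⁻¹^j) * hA + (-(t^(i-j))) * hB

lemma Qt_one (k : ℕ) (w : ℂ) :
    Qt k w 1 = ∑ i ∈ range k, w^(k-1-i) * ((i:ℂ)+1) := by
  unfold Qt
  refine sum_congr rfl fun i _ => ?_
  congr 1
  simp [Finset.sum_const, card_range]

lemma Qt_one_ne (k : ℕ) (hk : 2 ≤ k) (w : ℂ) (hw : ‖w‖ ≤ 1/(2*(k:ℝ)^2)) :
    Qt k w 1 ≠ 0 := by
  intro h0
  rw [Qt_one] at h0
  have hk' : k = (k-1)+1 := by omega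
  rw [hk', Finset.sum_range_succ] at h0
  simp only [Nat.add_sub_cancel] at h0
  have hlast : w^(k-1-(k-1)) * (((k-1:ℕ):ℂ)+1) = ((k:ℝ):ℂ) := by
    rw [Nat.sub_self, pow_zero, one_mul]
    push_cast
    have : ((k-1:ℕ):ℂ) = (k:ℂ) - 1 := by
      push_cast [Nat.cast_sub (by omega : 1 ≤ k)]; ring
    rw [this]; ring
  rw [hlast] at h0
  have hsum : ((k:ℝ):ℂ) = -(∑ i ∈ range (k-1), w^(k-1-i) * ((i:ℂ)+1)) := by
    linear_combination h0
  have hw1 : ‖w‖ ≤ 1 := by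
    have h2k : (2:ℝ) ≤ 2*(k:ℝ)^2 := by
      have : (1:ℝ) ≤ (k:ℝ) := by exact_mod_cast (by omega : 1 ≤ k)
      nlinarith
    have : 1/(2*(k:ℝ)^2) ≤ 1 := by
      rw [div_le_one (by linarith)]
      linarith
    linarith
  have hbound : ‖∑ i ∈ range (k-1), w^(k-1-i) * ((i:ℂ)+1)‖ ≤ (1:ℝ)/2 := by
    calc ‖∑ i ∈ range (k-1), w^(k-1-i) * ((i:ℂ)+1)‖
        ≤ ∑ i ∈ range (k-1), ‖w^(k-1-i) * ((i:ℂ)+1)‖ := norm_sum_le _ _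
      _ ≤ ∑ i ∈ range (k-1), ‖w‖ * (k:ℝ) := by
          refine Finset.sum_le_sum fun i hi => ?_
          have hi' := mem_range.mp hi
          rw [norm_mul, norm_pow]
          have h1 : ‖w‖^(k-1-i) ≤ ‖w‖ :=
            pow_le_of_le_one (norm_nonneg w) hw1 (by omega)
          have h2 : ‖((i:ℂ)+1)‖ ≤ (k:ℝ) := by
            have : ((i:ℂ)+1) = ((i+1:ℕ):ℂ) := by push_cast; ring
            rw [this, Complex.norm_natCast]
            exact_mod_cast (by omega : i+1 ≤ k)
          exact mul_le_mul h1 h2 (norm_nonneg _) (norm_nonneg w)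
      _ = (k-1:ℕ) * (‖w‖ * (k:ℝ)) := by rw [Finset.sum_const, card_range, nsmul_eq_mul]
      _ ≤ (k:ℝ) * (‖w‖ * (k:ℝ)) := by
          have : ((k-1:ℕ):ℝ) ≤ (k:ℝ) := by exact_mod_cast (by omega : k-1 ≤ k)
          have hnn : 0 ≤ ‖w‖ * (k:ℝ) := by positivity
          nlinarith
      _ ≤ (1:ℝ)/2 := by
          have hkpos : (0:ℝ) < (k:ℝ)^2 := by
            have : (0:ℝ) < (k:ℝ) := by exact_mod_cast (by omega : 0 < k)
            positivity
          calc (k:ℝ) * (‖w‖ * (k:ℝ)) = (k:ℝ)^2 * ‖w‖ := by ring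
            _ ≤ (k:ℝ)^2 * (1/(2*(k:ℝ)^2)) := by
                exact mul_le_mul_of_nonneg_left hw (le_of_lt hkpos)
            _ = 1/2 := by field_simp
  have : (k:ℝ) ≤ 1/2 := by
    calc (k:ℝ) = ‖((k:ℝ):ℂ)‖ := by
          rw [Complex.norm_real, Real.norm_eq_abs, abs_of_nonneg (by positivity)]
      _ = ‖∑ i ∈ range (k-1), w^(k-1-i) * ((i:ℂ)+1)‖ := by rw [hsum, norm_neg]
      _ ≤ 1/2 := hbound
  have : (2:ℝ) ≤ (k:ℝ) := by exact_mod_cast hk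
  linarith

lemma cont_Qt (k : ℕ) : Continuous (fun p : ℂ × ℂ => Qt k p.1 p.2) := by
  unfold Qt
  exact continuous_finset_sum _ fun i _ =>
    (continuous_fst.pow _).mul (continuous_finset_sum _ fun j _ => continuous_snd.pow _)

lemma cont_Qf (k : ℕ) : Continuous (fun p : ℂ × ℂ => Qf k p.1 p.2) := by
  unfold Qf
  exact continuous_finset_sum _ fun i _ => continuous_finset_sum _ fun j _ =>
    (continuous_fst.pow _).mul (continuous_snd.pow _)

lemma cont_sig (k : ℕ) : Continuous (sig k) := by
  unfold sig
  exact continuous_finset_sum _ fun i _ => continuous_pow _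

lemma far_from_one (k : ℕ) (hk : 2 ≤ k) :
    ∃ c₂ : ℝ, 0 < c₂ ∧ c₂ ≤ 1 ∧ ∀ w t : ℂ, ‖w‖ ≤ 1/(2*(k:ℝ)^2) → Qt k w t = 0 →
      c₂ ≤ ‖1 - t‖ := by
  set A : Set (ℂ × ℂ) :=
    {p | ‖p.1‖ ≤ 1/(2*(k:ℝ)^2) ∧ ‖1 - p.2‖ ≤ 1 ∧ Qt k p.1 p.2 = 0} with hA
  have hclosed : IsClosed A := by
    apply IsClosed.inter
    · exact isClosed_le (continuous_fst.norm) continuous_const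
    apply IsClosed.inter
    · exact isClosed_le ((continuous_const.sub continuous_snd).norm) continuous_const
    · exact isClosed_eq (cont_Qt k) continuous_const
  have hsub : A ⊆ (Metric.closedBall (0:ℂ) (1/(2*(k:ℝ)^2))) ×ˢ (Metric.closedBall (1:ℂ) 1) := by
    rintro ⟨w, t⟩ ⟨h1, h2, _⟩
    constructor
    · simpa [Metric.mem_closedBall, dist_eq_norm] using h1
    · simp only [Metric.mem_closedBall, dist_eq_norm]
      rwa [norm_sub_rev] at h2
  have hcomp : IsCompact A :=
    IsCompact.of_isClosed_subset ((isCompact_closedBall _ _).prod (isCompact_closedBall _ _))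
      hclosed hsub
  rcases A.eq_empty_or_nonempty with hemp | hne
  · refine ⟨1, one_pos, le_refl 1, fun w t hw hQt => ?_⟩
    by_contra hlt
    push_neg at hlt
    have : (w, t) ∈ A := ⟨hw, le_of_lt hlt, hQt⟩
    rw [hemp] at this
    exact this
  · have hcf : ContinuousOn (fun p : ℂ × ℂ => ‖1 - p.2‖) A :=
      ((continuous_const.sub continuous_snd).norm).continuousOn
    obtain ⟨p₀, hp₀, hmin⟩ := hcomp.exists_isMinOn hne hcf
    rw [isMinOn_iff] at hmin
    have hpos : 0 < ‖1 - p₀.2‖ := by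
      have hne1 : (1:ℂ) - p₀.2 ≠ 0 := by
        intro h
        have h2 : p₀.2 = 1 := by linear_combination -h
        exact Qt_one_ne k hk p₀.1 hp₀.1 (by rw [← h2]; exact hp₀.2.2)
      exact norm_pos_iff.mpr hne1
    refine ⟨min ‖1 - p₀.2‖ 1, lt_min hpos one_pos, min_le_right _ _, fun w t hw hQt => ?_⟩
    by_cases h1 : ‖1 - t‖ ≤ 1
    · have hmem : (w, t) ∈ A := ⟨hw, h1, hQt⟩
      have hge : ‖1 - p₀.2‖ ≤ ‖1 - t‖ := hmin (w, t) hmem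
      exact le_trans (min_le_left _ _) hge
    · push_neg at h1
      exact le_trans (min_le_right _ _) (le_of_lt h1)

lemma sep (k : ℕ) (hk : 2 ≤ k) :
    ∃ c : ℝ, 0 < c ∧ ∀ z : ℝ, 0 < z → ∀ u v : ℂ,
      sig k u = (z:ℂ) → sig k v = (z:ℂ) → u ≠ v → c * ‖u‖ ≤ ‖u - v‖ := by
  obtain ⟨c₂, hc₂pos, hc₂le, hc₂⟩ := far_from_one k hk
  set S : Set (ℂ × ℂ) :=
    {p | Qf k p.1 p.2 = 0 ∧ sig k p.1 = sig k p.2 ∧ (sig k p.1).im = 0 ∧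
      0 ≤ (sig k p.1).re ∧ ‖p.1‖ ≤ 2*(k:ℝ)^2 ∧ ‖p.1 - p.2‖ ≤ ‖p.1‖/2} with hS
  -- on S, p.1 ≠ p.2
  have hne : ∀ p ∈ S, p.1 ≠ p.2 := by
    rintro ⟨u, v⟩ ⟨hQ, hsig, him, hre, _, _⟩ heq
    simp only at heq
    subst heq
    have hval : sig k u = (((sig k u).re : ℝ) : ℂ) := by
      apply Complex.ext <;> simp [him]
    exact key_sep k hk u (sig k u).re hre hval hQ
  have hne0 : ∀ p ∈ S, p.1 ≠ 0 := by
    rintro ⟨u, v⟩ hp h0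
    simp only at h0
    subst h0
    have h6 := hp.2.2.2.2.2
    simp only [norm_zero, zero_div, zero_sub, norm_neg] at h6
    have hv : v = 0 := norm_le_zero_iff.mp h6
    exact hne (0, v) hp (by simp [hv])
  have hclosed : IsClosed S := by
    apply IsClosed.inter
    · exact isClosed_eq (cont_Qf k) continuous_const
    apply IsClosed.inter
    · exact isClosed_eq ((cont_sig k).comp continuous_fst) ((cont_sig k).comp continuous_snd)
    apply IsClosed.inter
    · exact isClosed_eq (Complex.continuous_im.comp ((cont_sig k).comp continuous_fst))
        continuous_const
    apply IsClosed.inter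
    · exact isClosed_le continuous_const
        (Complex.continuous_re.comp ((cont_sig k).comp continuous_fst))
    apply IsClosed.inter
    · exact isClosed_le continuous_fst.norm continuous_const
    · exact isClosed_le (continuous_fst.sub continuous_snd).norm
        (continuous_fst.norm.div_const 2)
  have hsub : S ⊆ (Metric.closedBall (0:ℂ) (2*(k:ℝ)^2)) ×ˢ
      (Metric.closedBall (0:ℂ) (3*(k:ℝ)^2)) := by
    rintro ⟨u, v⟩ ⟨_, _, _, _, h5, h6⟩
    constructor
    · simpa [Metric.mem_closedBall, dist_eq_norm] using h5
    · simp only [Metric.mem_closedBall, dist_eq_norm, sub_zero]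
      have : ‖v‖ ≤ ‖u‖ + ‖u - v‖ := by
        calc ‖v‖ = ‖u - (u - v)‖ := by ring_nf
          _ ≤ ‖u‖ + ‖u - v‖ := norm_sub_le _ _
      have h7 : ‖u - v‖ ≤ ‖u‖/2 := h6
      simp only at h5 this h7
      nlinarith [norm_nonneg (u - v)]
  have hcomp : IsCompact S :=
    IsCompact.of_isClosed_subset ((isCompact_closedBall _ _).prod (isCompact_closedBall _ _))
      hclosed hsub
  -- c₁ from compactness
  have hc1 : ∃ c₁ : ℝ, 0 < c₁ ∧ ∀ p ∈ S, c₁ * ‖p.1‖ ≤ ‖p.1 - p.2‖ := by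
    rcases S.eq_empty_or_nonempty with hemp | hSne
    · exact ⟨1, one_pos, by rw [hemp]; rintro p ⟨⟩⟩
    · have hcf : ContinuousOn (fun p : ℂ × ℂ => ‖p.1 - p.2‖ / ‖p.1‖) S := by
        apply ContinuousOn.div
        · exact (continuous_fst.sub continuous_snd).norm.continuousOn
        · exact continuous_fst.norm.continuousOn
        · intro p hp
          exact norm_ne_zero_iff.mpr (hne0 p hp)
      obtain ⟨p₀, hp₀, hmin⟩ := hcomp.exists_isMinOn hSne hcf
      rw [isMinOn_iff] at hmin
      have hp₀1 : 0 < ‖p₀.1‖ := norm_pos_iff.mpr (hne0 p₀ hp₀)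
      have hp₀d : 0 < ‖p₀.1 - p₀.2‖ :=
        norm_pos_iff.mpr (sub_ne_zero.mpr (hne p₀ hp₀))
      refine ⟨‖p₀.1 - p₀.2‖ / ‖p₀.1‖, div_pos hp₀d hp₀1, fun p hp => ?_⟩
      have h1 : 0 < ‖p.1‖ := norm_pos_iff.mpr (hne0 p hp)
      have h2 : ‖p₀.1 - p₀.2‖ / ‖p₀.1‖ ≤ ‖p.1 - p.2‖ / ‖p.1‖ := hmin p hp
      calc ‖p₀.1 - p₀.2‖ / ‖p₀.1‖ * ‖p.1‖ ≤ ‖p.1 - p.2‖ / ‖p.1‖ * ‖p.1‖ := by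
            exact mul_le_mul_of_nonneg_right h2 (le_of_lt h1)
        _ = ‖p.1 - p.2‖ := div_mul_cancel₀ _ (ne_of_gt h1)
  obtain ⟨c₁, hc₁pos, hc₁⟩ := hc1
  refine ⟨min (min c₁ (1/2)) c₂, by positivity, fun z hz u v hsu hsv huv => ?_⟩
  have hu0 : u ≠ 0 := by
    intro h0
    rw [h0] at hsu
    have : sig k 0 = 0 := by simp [sig]
    rw [this] at hsu
    have : z = 0 := by exact_mod_cast hsu.symm
    linarith
  have hQ : Qf k u v = 0 := by
    have h := sig_sub k u v
    rw [hsu, hsv, sub_self] at h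
    rcases mul_eq_zero.mp h.symm with h' | h'
    · exact h'
    · exact absurd (by linear_combination h' : u = v) huv
  have hkpos : (0:ℝ) < 2*(k:ℝ)^2 := by
    have : (0:ℝ) < (k:ℝ) := by exact_mod_cast (by omega : 0 < k)
    positivity
  have hupos : 0 < ‖u‖ := norm_pos_iff.mpr hu0
  by_cases hbig : 2*(k:ℝ)^2 ≤ ‖u‖
  · -- large u case
    have hw0 : u⁻¹ ≠ 0 := inv_ne_zero hu0
    have hQt : Qt k u⁻¹ (v * u⁻¹) = 0 := by
      rw [Qt_eq k u⁻¹ (v * u⁻¹) hw0, inv_inv]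
      have : v * u⁻¹ * u = v := by field_simp
      rw [this, hQ, mul_zero]
    have hwn : ‖u⁻¹‖ ≤ 1/(2*(k:ℝ)^2) := by
      rw [norm_inv, one_div]
      exact inv_anti₀ hkpos hbig
    have h1t := hc₂ u⁻¹ (v * u⁻¹) hwn hQt
    have hdiff : ‖u - v‖ = ‖1 - v * u⁻¹‖ * ‖u‖ := by
      rw [← norm_mul]
      congr 1
      field_simp
    calc min (min c₁ (1/2)) c₂ * ‖u‖ ≤ c₂ * ‖u‖ :=
          mul_le_mul_of_nonneg_right (min_le_right _ _) (norm_nonneg u)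
      _ ≤ ‖1 - v * u⁻¹‖ * ‖u‖ := mul_le_mul_of_nonneg_right h1t (norm_nonneg u)
      _ = ‖u - v‖ := hdiff.symm
  · push_neg at hbig
    by_cases hclose : ‖u - v‖ ≤ ‖u‖/2
    · have hmem : (u, v) ∈ S := by
        refine ⟨hQ, by rw [hsu, hsv], by rw [hsu]; simp, by rw [hsu]; simp [le_of_lt hz],
          le_of_lt hbig, hclose⟩
      have := hc₁ (u, v) hmem
      calc min (min c₁ (1/2)) c₂ * ‖u‖ ≤ c₁ * ‖u‖ := by
            have : min (min c₁ (1/2)) c₂ ≤ c₁ := le_trans (min_le_left _ _) (min_le_left _ _)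
            exact mul_le_mul_of_nonneg_right this (norm_nonneg u)
        _ ≤ ‖u - v‖ := this
    · push_neg at hclose
      calc min (min c₁ (1/2)) c₂ * ‖u‖ ≤ (1/2) * ‖u‖ := by
            have : min (min c₁ (1/2)) c₂ ≤ 1/2 := le_trans (min_le_left _ _) (min_le_right _ _)
            exact mul_le_mul_of_nonneg_right this (norm_nonneg u)
        _ = ‖u‖/2 := by ring
        _ ≤ ‖u - v‖ := le_of_lt hclose

lemma root_ne_zero (k : ℕ) (hk : 2 ≤ k) (z : ℝ) (hz : 0 < z) (lam : ℂ)
    (h : (X ^ k - C ((z : ℂ))⁻¹ * ∑ i ∈ Finset.range k, X ^ i : Polynomial ℂ).IsRoot lam) :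
    lam ≠ 0 ∧ sig k lam⁻¹ = (z:ℂ) := by
  have hz0 : ((z:ℂ)) ≠ 0 := by
    simp only [ne_eq, Complex.ofReal_eq_zero]
    linarith
  have heval : lam ^ k - ((z:ℂ))⁻¹ * ∑ i ∈ range k, lam ^ i = 0 := by
    have := h
    simpa [IsRoot, eval_finset_sum] using this
  have hlam0 : lam ≠ 0 := by
    intro h0
    subst h0
    have hsum : ∑ i ∈ range k, (0:ℂ) ^ i = 1 := by
      rw [Finset.sum_eq_single 0 (fun i _ hi => zero_pow hi)
        (fun h => absurd (mem_range.mpr (by omega)) h)]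
      simp
    rw [hsum, zero_pow (by omega : k ≠ 0), mul_one] at heval
    have : ((z:ℂ))⁻¹ = 0 := by linear_combination -heval
    exact hz0 (inv_eq_zero.mp this)
  refine ⟨hlam0, ?_⟩
  have hsum : ∑ i ∈ range k, lam ^ i = (z:ℂ) * lam ^ k := by
    have h1 : lam ^ k = ((z:ℂ))⁻¹ * ∑ i ∈ range k, lam ^ i := by linear_combination heval
    rw [h1]
    field_simp
  have hkey : lam ^ k * sig k lam⁻¹ = lam ^ k * (z:ℂ) := by
    rw [sig, Finset.mul_sum]
    have hterm : ∀ i ∈ range k, lam ^ k * (lam⁻¹) ^ (i+1) = lam ^ (k-1-i) := by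
      intro i hi
      have hik := mem_range.mp hi
      have hsplit : lam ^ k = lam ^ (k-1-i) * lam ^ (i+1) := by
        rw [← pow_add]; congr 1; omega
      rw [hsplit, inv_pow, mul_assoc, mul_inv_cancel₀ (pow_ne_zero _ hlam0), mul_one]
    rw [Finset.sum_congr rfl hterm, Finset.sum_range_reflect (fun i => lam ^ i) k, hsum]
    ring
  exact mul_left_cancel₀ (pow_ne_zero k hlam0) hkey


end Stmt14Aux

open Stmt14Aux

/-- Uniform-in-`z` separation of roots: there is `c_k > 0` such that for all `z > 0`
and any two distinct roots `λ, μ` of `λ^k - z⁻¹ (λ^{k-1} + ⋯ + λ + 1)`,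
`|λ - μ| ≥ c_k |μ|`. -/
theorem stmt_14 (k : ℕ) (hk : 2 ≤ k) :
    ∃ c : ℝ, 0 < c ∧ ∀ z : ℝ, 0 < z → ∀ lam mu : ℂ,
      (X ^ k - C ((z : ℂ))⁻¹ * ∑ i ∈ Finset.range k, X ^ i : Polynomial ℂ).IsRoot lam →
      (X ^ k - C ((z : ℂ))⁻¹ * ∑ i ∈ Finset.range k, X ^ i : Polynomial ℂ).IsRoot mu →
      lam ≠ mu → c * ‖mu‖ ≤ ‖lam - mu‖ := by
  obtain ⟨c, hc, hsep⟩ := sep k hk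
  refine ⟨c, hc, fun z hz lam mu hlam hmu hne => ?_⟩
  obtain ⟨hlam0, hsiglam⟩ := root_ne_zero k hk z hz lam hlam
  obtain ⟨hmu0, hsigmu⟩ := root_ne_zero k hk z hz mu hmu
  have huv : lam⁻¹ ≠ mu⁻¹ := fun h => hne (inv_injective h)
  have hineq := hsep z hz lam⁻¹ mu⁻¹ hsiglam hsigmu huv
  -- convert
  have hfac : lam - mu = (mu⁻¹ - lam⁻¹) * lam * mu := by field_simp
  have : ‖lam - mu‖ = ‖lam⁻¹ - mu⁻¹‖ * (‖lam‖ * ‖mu‖) := by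
    rw [hfac, norm_mul, norm_mul, norm_sub_rev]
    ring
  rw [this]
  have hlpos : 0 < ‖lam‖ := norm_pos_iff.mpr hlam0
  have hmpos : 0 < ‖mu‖ := norm_pos_iff.mpr hmu0
  have h2 : c * ‖lam⁻¹‖ * (‖lam‖ * ‖mu‖) ≤ ‖lam⁻¹ - mu⁻¹‖ * (‖lam‖ * ‖mu‖) :=
    mul_le_mul_of_nonneg_right hineq (by positivity)
  have h3 : c * ‖lam⁻¹‖ * (‖lam‖ * ‖mu‖) = c * ‖mu‖ := by
    have hab : ‖lam‖ ≠ 0 := by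
      exact ne_of_gt hlpos
    rw [norm_inv]
    field_simp
  linarith
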